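/- arXiv:2306.05408 — 2 statements merged into one kernel-verified Lean document; each statement's English description precedes it below -/
import Mathlib

section
/- Let 1 ≤ p < ∞, η ∈ (0,1), ε > 0, let f be holomorphic on 𝔻, and set 𝒜 = {α ∈ 𝔻 : (1−|α|)^p |f′(α)|^p < (ε / m(Δ_η(α))) ∫_{Δ_η(α)} (1−|z|)^p |f′(z)|^p dm(z)}. Then there exist a constant C₁ = C₁(η) > 0 and β ∈ (1/2, 1), both depending only on η (and p), such that for every ξ ∈ 𝕋, ∫_{𝒜 ∩ Γ_{1/2}(ξ)} (1−|z|)^p |f′(z)|^p dm(z)/(1−|z|) ≤ ε C₁ ∫_{Γ_β(ξ)} (1−|z|)^p |f′(z)|^p dm(z)/(1−|z|). -/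
open MeasureTheory Complex Set
open scoped Real ENNReal

noncomputable section

/-- The open unit disc in `ℂ`. -/
def unitDisc : Set ℂ := Metric.ball 0 1

/-- The normalized area Lebesgue measure on `ℂ`. -/
def mA : Measure ℂ := (ENNReal.ofReal Real.pi)⁻¹ • (volume : Measure ℂ)

/-- The cone-like region `Γ_β(ξ) = {|z| < β} ∪ ⋃_{|z|<β} [z, ξ)`. -/
def coneRegion (β : ℝ) (ξ : ℂ) : Set ℂ :=
  {z : ℂ | ‖z‖ < β} ∪
    ⋃ z ∈ {w : ℂ | ‖w‖ < β},
      {w : ℂ | ∃ t : ℝ, 0 ≤ t ∧ t < 1 ∧ w = (1 - t) * z + t * ξ}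

/-- The pseudohyperbolic disc `Δ(α,η)`. -/
def pDisc (α : ℂ) (η : ℝ) : Set ℂ :=
  {z ∈ unitDisc | ‖(α - z) / (1 - (starRingEnd ℂ) α * z)‖ < η}

/-- The Euclidean disc `Δ_η(α) = {z : |z - α| < η(1-|α|)}`. -/
def eDisc (η : ℝ) (α : ℂ) : Set ℂ :=
  {z : ℂ | ‖z - α‖ < η * (1 - ‖α‖)}

/-- The tent-space expression of `f` with aperture `β`, restricted to a set `G`:
`(∫_𝕋 (∫_{Γ_β(ξ) ∩ G} |f(z)|^p dm(z)/(1-|z|))^{q/p} |dξ|)^{1/q}`. -/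
def tentNormOn (p q β : ℝ) (G : Set ℂ) (f : ℂ → ℂ) : ℝ≥0∞ :=
  (∫⁻ θ in Set.Ioo 0 (2 * Real.pi),
      (∫⁻ z in coneRegion β (Complex.exp (θ * Complex.I)) ∩ G,
          ENNReal.ofReal (‖f z‖ ^ p / (1 - ‖z‖)) ∂mA) ^ (q / p))
    ^ (1 / q)

/-- The tent space (quasi-)norm `‖f‖_{T_p^q}` (aperture `1/2`). -/
def tentNorm (p q : ℝ) (f : ℂ → ℂ) : ℝ≥0∞ := tentNormOn p q (1/2) Set.univ f

/-- `ρ_{p,q}(f) = ((1/2π)∫_0^{2π} (∫_0^1 |f(re^{iθ})|^p dr)^{q/p} dθ)^{1/q}`. -/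
def rho (p q : ℝ) (f : ℂ → ℂ) : ℝ≥0∞ :=
  ((ENNReal.ofReal (2 * Real.pi))⁻¹ *
      ∫⁻ θ in Set.Ioo 0 (2 * Real.pi),
        (∫⁻ r in Set.Ioo (0:ℝ) 1,
            ENNReal.ofReal (‖f ((r : ℂ) * Complex.exp (θ * Complex.I))‖ ^ p))
          ^ (q / p)) ^ (1 / q)

/-- Membership in `RM(p,q)`. -/
def memRM (p q : ℝ) (f : ℂ → ℂ) : Prop :=
  DifferentiableOn ℂ f unitDisc ∧ rho p q f < ⊤

/-- The Pommerenke integration operator `T_g f(z) = ∫_0^z f(ζ) g'(ζ) dζ`. -/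
def Tg (g f : ℂ → ℂ) (z : ℂ) : ℂ :=
  z * ∫ t in Set.Ioo (0:ℝ) 1, f ((t : ℂ) * z) * deriv g ((t : ℂ) * z)

/-- The companion operator `S_g f(z) = ∫_0^z f'(ζ) g(ζ) dζ`. -/
def Sg (g f : ℂ → ℂ) (z : ℂ) : ℂ :=
  z * ∫ t in Set.Ioo (0:ℝ) 1, deriv f ((t : ℂ) * z) * g ((t : ℂ) * z)

/-- Membership in the Bloch space `𝓑`. -/
def memBloch (g : ℂ → ℂ) : Prop :=
  DifferentiableOn ℂ g unitDisc ∧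
    ∃ M : ℝ, ∀ z ∈ unitDisc, ‖deriv g z‖ * (1 - ‖z‖ ^ 2) ≤ M

/-- Membership in `H^∞`. -/
def memHinf (g : ℂ → ℂ) : Prop :=
  DifferentiableOn ℂ g unitDisc ∧ ∃ M : ℝ, ∀ z ∈ unitDisc, ‖g z‖ ≤ M

/-- The set `E_λ(α) = {z ∈ Δ_η(α) : |f(z)|^p ≥ λ |f(α)|^p}`. -/
def Eset (p η : ℝ) (f : ℂ → ℂ) (lam : ℝ) (α : ℂ) : Set ℂ :=
  {z ∈ eDisc η α | lam * ‖f α‖ ^ p ≤ ‖f z‖ ^ p}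

/-- The average `B_λ f(α) = (1/m(E_λ(α))) ∫_{E_λ(α)} |f(z)|^p dm(z)` (in `ℝ≥0∞`). -/
def Bavg (p η : ℝ) (f : ℂ → ℂ) (lam : ℝ) (α : ℂ) : ℝ≥0∞ :=
  (∫⁻ z in Eset p η f lam α, ENNReal.ofReal (‖f z‖ ^ p) ∂mA) /
    mA (Eset p η f lam α)

/-- The derivative variant `E_λ(α) = {z ∈ Δ_η(α) : (1-|z|)^p |f'(z)|^p ≥ λ (1-|α|)^p |f'(α)|^p}`. -/
def EsetD (p η : ℝ) (f : ℂ → ℂ) (lam : ℝ) (α : ℂ) : Set ℂ :=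
  {z ∈ eDisc η α |
    lam * ((1 - ‖α‖) ^ p * ‖deriv f α‖ ^ p) ≤
      (1 - ‖z‖) ^ p * ‖deriv f z‖ ^ p}

/-- The derivative variant of `B_λ f(α)` (in `ℝ≥0∞`). -/
def BavgD (p η : ℝ) (f : ℂ → ℂ) (lam : ℝ) (α : ℂ) : ℝ≥0∞ :=
  (∫⁻ z in EsetD p η f lam α,
      ENNReal.ofReal (‖deriv f z‖ ^ p * (1 - ‖z‖) ^ p) ∂mA) /
    mA (EsetD p η f lam α)

/-- The test functions `f_α(z) = (1-|α|²)^{γ-1/p-1/q} / (1-ᾱz)^γ`. -/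
def testFun (p q γ : ℝ) (α z : ℂ) : ℂ :=
  (((1 - ‖α‖ ^ 2) ^ (γ - 1/p - 1/q) : ℝ) : ℂ) /
    (1 - (starRingEnd ℂ) α * z) ^ (γ : ℂ)

lemma mem_coneRegion_iff {β : ℝ} {ξ w : ℂ} :
    w ∈ coneRegion β ξ ↔ ∃ t : ℝ, 0 ≤ t ∧ t < 1 ∧ ‖w - t * ξ‖ < β * (1 - t) := by
  constructor
  · rintro (h | h)
    · exact ⟨0, le_rfl, one_pos, by simpa using h⟩
    · simp only [Set.mem_iUnion, Set.mem_setOf_eq] at h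
      obtain ⟨z, hz, t, ht0, ht1, rfl⟩ := h
      refine ⟨t, ht0, ht1, ?_⟩
      have : (1 - t) * z + t * ξ - t * ξ = (1-t) * z := by ring
      rw [this, norm_mul]
      have h1t : (0:ℝ) < 1 - t := by linarith
      have : ‖(1:ℂ) - t‖ = 1 - t := by
        rw [show ((1:ℂ) - t) = ((1 - t : ℝ) : ℂ) by push_cast; ring, Complex.norm_real, Real.norm_eq_abs,
          abs_of_pos h1t]
      rw [this]
      rw [mul_comm β]; exact mul_lt_mul_of_pos_left hz h1t
  · rintro ⟨t, ht0, ht1, h⟩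
    right
    simp only [Set.mem_iUnion, Set.mem_setOf_eq]
    have h1t : (0:ℝ) < 1 - t := by linarith
    refine ⟨(w - t * ξ) / (1 - t), ?_, t, ht0, ht1, ?_⟩
    · rw [norm_div]
      have : ‖(1:ℂ) - t‖ = 1 - t := by
        rw [show ((1:ℂ) - t) = ((1 - t : ℝ) : ℂ) by push_cast; ring, Complex.norm_real, Real.norm_eq_abs,
          abs_of_pos h1t]
      rw [this, div_lt_iff₀ h1t]
      linarith [h]
    · have hne : ((1:ℂ) - t) ≠ 0 := by
        rw [show ((1:ℂ) - t) = ((1 - t : ℝ) : ℂ) by push_cast; ring]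
        exact_mod_cast h1t.ne'
      field_simp
      ring

lemma abs_coe {t : ℝ} (ht : 0 ≤ t) : ‖((t:ℝ):ℂ)‖ = t := by
  rw [Complex.norm_real, Real.norm_eq_abs, _root_.abs_of_nonneg ht]

lemma coneRegion_lt_one {β : ℝ} {ξ w : ℂ} (hβ : β < 1) (hξ : ‖ξ‖ = 1)
    (hw : w ∈ coneRegion β ξ) : ‖w‖ < 1 := by
  obtain ⟨t, ht0, ht1, h⟩ := mem_coneRegion_iff.mp hw
  have h2 : ‖w‖ ≤ ‖w - t*ξ‖ + ‖(t:ℂ)*ξ‖ := by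
    have := norm_add_le (w - t*ξ) ((t:ℂ)*ξ); simpa using this
  have h3 : ‖(t:ℂ)*ξ‖ = t := by rw [norm_mul, abs_coe ht0, hξ, mul_one]
  nlinarith

lemma key_quad (b l d e r : ℝ) (hd : 0 < d) (hl : 0 < l)
    (hbl : b^2*l^2 = l^2 - 2) (hlf : l*(1-e) = 8) (hr : r < -(d*(1-e)/4)) :
    d^2 + (l*d)^2 + 2*(l*d)*r < b^2 * (l*d)^2 := by
  have h7 : 2*(l*d)*r < 2*(l*d)*(-(d*(1-e)/4)) :=
    mul_lt_mul_of_pos_left hr (by positivity)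
  have h8 : 2*(l*d)*(-(d*(1-e)/4)) = -((l*(1-e))*d^2)/2 := by ring
  have h9 : -((l*(1-e))*d^2)/2 = -4*d^2 := by rw [hlf]; ring
  have h10 : b^2*(l*d)^2 = (l^2-2)*d^2 := by
    calc b^2*(l*d)^2 = b^2*l^2*d^2 := by ring
      _ = (l^2-2)*d^2 := by rw [hbl]
  have hd2 : 0 < d^2 := pow_pos hd 2
  rw [h10]
  nlinarith [h7]

lemma cone_geom {η : ℝ} (hη0 : 0 < η) (hη1 : η < 1) {ξ z w : ℂ} (hξ : ‖ξ‖ = 1)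
    (hz : z ∈ coneRegion (1/2) ξ) (hw : ‖w - z‖ < η * (1 - ‖z‖)) :
    w ∈ coneRegion (Real.sqrt (1 - (1-η)^2/32)) ξ := by
  set β := Real.sqrt (1 - (1-η)^2/32) with hβdef
  have hβsq : β^2 = 1 - (1-η)^2/32 := Real.sq_sqrt (by nlinarith)
  have hβ0 : 0 ≤ β := Real.sqrt_nonneg _
  have hβ1 : β ≤ 1 := by nlinarith
  obtain ⟨s, hs0, hs1, hzs⟩ := mem_coneRegion_iff.mp hz
  have habs_s : ‖(s:ℂ)*ξ‖ = s := by rw [norm_mul, abs_coe hs0, hξ, mul_one]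
  -- |z| < (1-s)/2 + s
  have hz1 : ‖z‖ < (1-s)/2 + s := by
    have := norm_add_le (z - s*ξ) ((s:ℂ)*ξ)
    simp only [sub_add_cancel] at this
    rw [habs_s] at this
    linarith
  have hz2 : (1-s)/2 < 1 - ‖z‖ := by linarith
  have hzlt : ‖z‖ < 1 := by linarith
  -- |z - ξ| < 3 (1 - |z|)
  have hsxi : ‖(s:ℂ)*ξ - ξ‖ = 1 - s := by
    have : (s:ℂ)*ξ - ξ = (((s-1:ℝ)):ℂ) * ξ := by push_cast; ring
    rw [this, norm_mul, hξ, mul_one, Complex.norm_real, Real.norm_eq_abs, abs_of_nonpos (by linarith)]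
    ring
  have hzxi : ‖z - ξ‖ < 3 * (1 - ‖z‖) := by
    have h := norm_add_le (z - s*ξ) ((s:ℂ)*ξ - ξ)
    simp only [sub_add_sub_cancel] at h
    rw [hsxi] at h
    linarith
  -- |w| bounds
  have hwz : ‖w‖ ≤ ‖z‖ + ‖w - z‖ := by
    have := norm_add_le z (w - z)
    simpa using this
  have hA : (1-η) * (1 - ‖z‖) < 1 - ‖w‖ := by nlinarith
  have hwlt : ‖w‖ < 1 := by nlinarith
  set d := ‖w - ξ‖ with hd
  have hd0 : 0 < d := by
    have h6 := norm_add_le (ξ - w) w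
    simp only [sub_add_cancel] at h6
    rw [hξ, norm_sub_rev ξ w] at h6
    linarith
  have hwxi : d * (1-η) < 4 * (1 - ‖w‖) := by
    have h := norm_add_le (w - z) (z - ξ)
    simp only [sub_add_sub_cancel] at h
    nlinarith
  set lam := 8/(1-η) with hlam
  have hlam0 : 0 < lam := by
    rw [hlam]; apply div_pos <;> norm_num; linarith
  -- key real estimate on the re part
  have hre : ((w - ξ) * (starRingEnd ℂ) ξ).re ≤ ‖w‖ - 1 := by
    have h1 : (w * (starRingEnd ℂ) ξ).re ≤ ‖w‖ := by
      calc (w * (starRingEnd ℂ) ξ).re ≤ ‖w * (starRingEnd ℂ) ξ‖ := Complex.re_le_norm _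
        _ = ‖w‖ := by rw [norm_mul, Complex.norm_conj, hξ, mul_one]
    have h2 : (ξ * (starRingEnd ℂ) ξ).re = 1 := by
      rw [Complex.mul_conj]
      simp [Complex.normSq_eq_norm_sq, hξ]
    have : ((w - ξ) * (starRingEnd ℂ) ξ).re = (w * (starRingEnd ℂ) ξ).re - (ξ * (starRingEnd ℂ) ξ).re := by
      rw [sub_mul, Complex.sub_re]
    rw [this, h2]
    linarith
  have hc : (0:ℝ) < lam * d := mul_pos hlam0 hd0
  have hβlam : β^2 * lam^2 = lam^2 - 2 := by
    have hu : (1:ℝ) - η ≠ 0 := by linarith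
    rw [hβsq, hlam, div_pow]
    field_simp
    ring
  have hlamfact : lam * (1 - η) = 8 := by
    rw [hlam]; exact div_mul_cancel₀ 8 (by linarith)
  by_cases hcase : lam * d ≤ 1
  · refine mem_coneRegion_iff.mpr ⟨1 - lam * d, by linarith, by linarith, ?_⟩
    have hsplit : w - ((1 - lam*d : ℝ):ℂ) * ξ = (w - ξ) + ((lam*d : ℝ):ℂ) * ξ := by
      push_cast; ring
    have hns : Complex.normSq (w - ((1 - lam*d : ℝ):ℂ) * ξ)
        = d^2 + (lam*d)^2 + 2 * (lam*d) * ((w - ξ) * (starRingEnd ℂ) ξ).re := by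
      rw [hsplit, Complex.normSq_add]
      have e1 : Complex.normSq (w - ξ) = d^2 := by
        rw [← Complex.sq_norm]
      have e2 : Complex.normSq (((lam*d : ℝ):ℂ) * ξ) = (lam*d)^2 := by
        rw [← Complex.sq_norm, norm_mul, hξ, mul_one, abs_coe hc.le]
      have e3 : ((w - ξ) * (starRingEnd ℂ) (((lam*d : ℝ):ℂ) * ξ)).re
          = (lam*d) * ((w - ξ) * (starRingEnd ℂ) ξ).re := by
        rw [map_mul, Complex.conj_ofReal, show (w - ξ) * (((lam*d:ℝ):ℂ) * (starRingEnd ℂ) ξ)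
          = ((lam*d:ℝ):ℂ) * ((w - ξ) * (starRingEnd ℂ) ξ) by ring, Complex.re_ofReal_mul]
      rw [e1, e2, e3]
      ring
    have hkey : Complex.normSq (w - ((1 - lam*d : ℝ):ℂ) * ξ) < β^2 * (lam*d)^2 := by
      rw [hns]
      have hwb : ((w - ξ) * (starRingEnd ℂ) ξ).re < -(d * (1-η)/4) := by linarith
      exact key_quad β lam d η _ hd0 hlam0 hβlam hlamfact hwb
    have habs2 : (‖w - ((1 - lam*d : ℝ):ℂ) * ξ‖)^2 < (β * (lam*d))^2 := by
      rw [Complex.sq_norm]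
      calc Complex.normSq _ < β^2 * (lam*d)^2 := hkey
        _ = (β * (lam*d))^2 := by ring
    have : ‖w - ((1 - lam*d : ℝ):ℂ) * ξ‖ < β * (lam*d) :=
      lt_of_pow_lt_pow_left₀ 2 (by positivity) habs2
    calc ‖w - ((1 - lam*d : ℝ):ℂ) * ξ‖ < β * (lam*d) := this
      _ = β * (1 - (1 - lam*d)) := by ring
  · push_neg at hcase
    have h1η : (0:ℝ) < 1 - η := by linarith
    have h1 : 1 - ‖w‖ > (1-η)^2/32 := by
      have hdl : d * (8/(1-η)) > 1 := by rw [← hlam]; linarith [mul_comm lam d]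
      have hd8 : d * 8 > 1 - η := by
        calc d * 8 = (d * (8/(1-η))) * (1-η) := by field_simp
          _ > 1 * (1-η) := mul_lt_mul_of_pos_right hdl h1η
          _ = 1 - η := one_mul _
      have h2 : (1-η)*(1-η) < (d*8)*(1-η) := mul_lt_mul_of_pos_right hd8 h1η
      have h3 : (d*8)*(1-η) = 8*(d*(1-η)) := by ring
      have h4 : (1-η)^2 = (1-η)*(1-η) := by ring
      linarith [hwxi]
    have hwβ : ‖w‖ < β^2 := by rw [hβsq]; linarith
    have hββ : β^2 ≤ β := by
      calc β^2 = β*β := by ring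
        _ ≤ 1*β := mul_le_mul_of_nonneg_right hβ1 hβ0
        _ = β := one_mul β
    refine mem_coneRegion_iff.mpr ⟨0, le_rfl, one_pos, ?_⟩
    have e0 : w - ((0:ℝ):ℂ) * ξ = w := by push_cast; ring
    rw [e0]
    calc ‖w‖ < β := lt_of_lt_of_le hwβ hββ
      _ = β * (1 - 0) := by ring

lemma isOpen_coneRegion (β : ℝ) (ξ : ℂ) : IsOpen (coneRegion β ξ) := by
  have hrw : coneRegion β ξ
      = ⋃ t : ℝ, {w : ℂ | 0 ≤ t ∧ t < 1 ∧ ‖w - t*ξ‖ < β*(1-t)} := by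
    ext w
    simp only [Set.mem_iUnion, Set.mem_setOf_eq]
    exact mem_coneRegion_iff
  rw [hrw]
  refine isOpen_iUnion fun t => ?_
  by_cases h : 0 ≤ t ∧ t < 1
  · have : {w : ℂ | 0 ≤ t ∧ t < 1 ∧ ‖w - t*ξ‖ < β*(1-t)}
        = Metric.ball ((t:ℂ)*ξ) (β*(1-t)) := by
      ext w
      simp [Metric.mem_ball, Complex.dist_eq, h.1, h.2]
    rw [this]
    exact Metric.isOpen_ball
  · have : {w : ℂ | 0 ≤ t ∧ t < 1 ∧ ‖w - t*ξ‖ < β*(1-t)} = ∅ := by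
      ext w
      simp only [Set.mem_setOf_eq, Set.mem_empty_iff_false, iff_false]
      tauto
    rw [this]
    exact isOpen_empty

lemma mA_ball' (a : ℂ) (r : ℝ) : mA (Metric.ball a r) = (ENNReal.ofReal r)^2 := by
  rw [mA, Measure.smul_apply, smul_eq_mul, Complex.volume_ball]
  have hπ : (NNReal.pi : ℝ≥0∞) = ENNReal.ofReal Real.pi := by
    rw [← NNReal.coe_real_pi, ENNReal.ofReal_coe_nnreal]
  rw [hπ, mul_comm ((ENNReal.ofReal r)^2), ← mul_assoc, ENNReal.inv_mul_cancel, one_mul]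
  · exact (ENNReal.ofReal_pos.mpr Real.pi_pos).ne'
  · exact ENNReal.ofReal_ne_top

lemma mA_ball (a : ℂ) {r : ℝ} (hr : 0 ≤ r) :
    mA (Metric.ball a r) = ENNReal.ofReal (r^2) := by
  rw [mA_ball', ← ENNReal.ofReal_pow hr]

lemma eDisc_eq_ball (η : ℝ) (α : ℂ) :
    eDisc η α = Metric.ball α (η * (1 - ‖α‖)) := by
  ext z
  simp [eDisc, Metric.mem_ball, Complex.dist_eq]

lemma inv_cube_bound {η X Y : ℝ} (hη : 0 < η) (hX : 0 < X) (hY : 0 < Y)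
    (h : Y ≤ (1+η)*X) : (η^2 * X^3)⁻¹ ≤ (1+η)^3 / (η^2 * Y^3) := by
  have hYX : Y^3 ≤ (1+η)^3 * X^3 := by
    calc Y^3 ≤ ((1+η)*X)^3 := pow_le_pow_left₀ hY.le h 3
      _ = (1+η)^3 * X^3 := by ring
  rw [inv_eq_one_div, div_le_div_iff₀ (by positivity) (by positivity)]
  nlinarith [mul_le_mul_of_nonneg_left hYX (sq_nonneg η)]

lemma c3_r2_eq {η Y : ℝ} (hη : 0 < η) (hη1 : η < 1) (hY : 0 < Y) :
    ((1+η)^3 / (η^2 * Y^3)) * (η * Y / (1-η))^2 = ((1+η)^3 / (1-η)^2) / Y := by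
  have h1 : (1:ℝ) - η ≠ 0 := by linarith
  field_simp

instance : SFinite mA := by unfold mA; infer_instance

/-- derivative version of the exceptional-set lemma for `𝒜`,
with the quantity `(1-|z|)^p |f'(z)|^p` in place of `|f(z)|^p`. -/
theorem lemma_A_estimate_deriv (p : ℝ) (hp : 1 ≤ p) (η : ℝ) (hη : η ∈ Set.Ioo (0:ℝ) 1) :
    ∃ C₁ > (0:ℝ), ∃ β ∈ Set.Ioo (1/2 : ℝ) 1, ∀ ε > (0:ℝ), ∀ f : ℂ → ℂ,
      DifferentiableOn ℂ f unitDisc → ∀ ξ : ℂ, ‖ξ‖ = 1 →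
        (∫⁻ z in {α ∈ unitDisc |
              ENNReal.ofReal ((1 - ‖α‖) ^ p * ‖deriv f α‖ ^ p) *
                  mA (eDisc η α) <
                ENNReal.ofReal ε *
                  ∫⁻ w in eDisc η α,
                    ENNReal.ofReal ((1 - ‖w‖) ^ p * ‖deriv f w‖ ^ p)
                      ∂mA} ∩
            coneRegion (1/2) ξ,
            ENNReal.ofReal
              ((1 - ‖z‖) ^ p * ‖deriv f z‖ ^ p / (1 - ‖z‖))
              ∂mA) ≤
          ENNReal.ofReal (ε * C₁) *
            ∫⁻ z in coneRegion β ξ,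
              ENNReal.ofReal
                ((1 - ‖z‖) ^ p * ‖deriv f z‖ ^ p /
                  (1 - ‖z‖)) ∂mA := by
  obtain ⟨hη0, hη1⟩ := hη
  have hp0 : (0:ℝ) ≤ p := by linarith
  have h1η : (0:ℝ) < 1 - η := by linarith
  set β := Real.sqrt (1 - (1-η)^2/32) with hβdef
  have hβsq : β^2 = 1 - (1-η)^2/32 := Real.sq_sqrt (by nlinarith)
  have hβ0 : 0 ≤ β := Real.sqrt_nonneg _
  have hηsq : (1-η)^2 < 1 := by nlinarith
  have hβhalf : 1/2 < β := by nlinarith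
  have hβ1 : β < 1 := by nlinarith
  refine ⟨(1+η)^3/(1-η)^2, by positivity, β, ⟨hβhalf, hβ1⟩, ?_⟩
  intro ε hε f hf ξ hξ
  set C₁ : ℝ := (1+η)^3/(1-η)^2 with hC₁def
  have hC₁0 : 0 ≤ C₁ := by positivity
  -- abbreviations
  set F : ℂ → ℝ := fun w => (1 - ‖w‖) ^ p * ‖deriv f w‖ ^ p with hFdef
  set g : ℂ → ℝ≥0∞ := fun w => ENNReal.ofReal (F w) with hgdef
  have hFnn : ∀ w : ℂ, ‖w‖ < 1 → 0 ≤ F w := fun w hw =>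
    mul_nonneg (Real.rpow_nonneg (by linarith) p) (Real.rpow_nonneg (norm_nonneg _) p)
  have hFmeas : Measurable F := by
    apply Measurable.mul
    · exact (Real.continuous_rpow_const hp0).measurable.comp
        (continuous_const.sub continuous_norm).measurable
    · exact (Real.continuous_rpow_const hp0).measurable.comp
        (continuous_norm.measurable.comp (measurable_deriv f))
  have hgmeas : Measurable g := ENNReal.measurable_ofReal.comp hFmeas
  set G := coneRegion (1/2) ξ with hGdef
  set Gβ := coneRegion β ξ with hGβdef
  have hGopen : IsOpen G := isOpen_coneRegion _ _
  have hGβopen : IsOpen Gβ := isOpen_coneRegion _ _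
  set E : Set (ℂ × ℂ) :=
    {q : ℂ × ℂ | q.1 ∈ G ∧ ‖q.2 - q.1‖ < η * (1 - ‖q.1‖)} with hEdef
  have hEopen : IsOpen E := by
    have hrw : E = {q : ℂ × ℂ | q.1 ∈ G} ∩
        {q : ℂ × ℂ | ‖q.2 - q.1‖ < η * (1 - ‖q.1‖)} := rfl
    rw [hrw]
    exact (hGopen.preimage continuous_fst).inter
      (isOpen_lt (continuous_norm.comp (continuous_snd.sub continuous_fst))
        (continuous_const.mul (continuous_const.sub
          (continuous_norm.comp continuous_fst))))
  set c : ℂ → ℝ≥0∞ := fun z => ENNReal.ofReal (η^2 * (1 - ‖z‖)^3) with hcdef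
  have hcmeas : Measurable c := ENNReal.measurable_ofReal.comp
    (continuous_const.mul ((continuous_const.sub continuous_norm).pow 3)).measurable
  set K : ℂ → ℂ → ℝ≥0∞ :=
    fun z w => E.indicator (fun _ => (1:ℝ≥0∞)) (z, w) * (c z)⁻¹ * g w with hKdef
  have hKmeas : Measurable (Function.uncurry K) := by
    refine Measurable.mul (Measurable.mul ?_ ?_) ?_
    · exact measurable_const.indicator hEopen.measurableSet
    · exact (hcmeas.comp measurable_fst).inv
    · exact hgmeas.comp measurable_snd
  have heDiscMeas : ∀ α : ℂ, MeasurableSet (eDisc η α) := by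
    intro α
    rw [eDisc_eq_ball]
    exact measurableSet_ball
  -- measurability of the exceptional set
  set A := {α ∈ unitDisc |
      ENNReal.ofReal ((1 - ‖α‖) ^ p * ‖deriv f α‖ ^ p) *
          mA (eDisc η α) <
        ENNReal.ofReal ε *
          ∫⁻ w in eDisc η α,
            ENNReal.ofReal ((1 - ‖w‖) ^ p * ‖deriv f w‖ ^ p)
              ∂mA} with hAdef
  have hAmeas : MeasurableSet A := by
    have h1 : Measurable fun α : ℂ => g α * mA (eDisc η α) := by
      apply hgmeas.mul
      have hrw : (fun α : ℂ => mA (eDisc η α))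
          = fun α => (ENNReal.ofReal (η * (1 - ‖α‖)))^2 := by
        funext α
        rw [eDisc_eq_ball, mA_ball']
      rw [hrw]
      exact (ENNReal.measurable_ofReal.comp
        (continuous_const.mul (continuous_const.sub continuous_norm)).measurable).pow_const 2
    have h2 : Measurable fun α : ℂ => ENNReal.ofReal ε * ∫⁻ w in eDisc η α, g w ∂mA := by
      apply Measurable.const_mul
      have hDopen : IsOpen {q : ℂ × ℂ | ‖q.2 - q.1‖ < η * (1 - ‖q.1‖)} :=
        isOpen_lt (continuous_norm.comp (continuous_snd.sub continuous_fst))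
          (continuous_const.mul (continuous_const.sub
            (continuous_norm.comp continuous_fst)))
      have hrw : (fun α : ℂ => ∫⁻ w in eDisc η α, g w ∂mA)
          = fun α => ∫⁻ w, ({q : ℂ × ℂ |
              ‖q.2 - q.1‖ < η * (1 - ‖q.1‖)}.indicator
              (fun q => g q.2)) (α, w) ∂mA := by
        funext α
        rw [← lintegral_indicator (heDiscMeas α)]
        refine lintegral_congr fun w => ?_
        by_cases hw : w ∈ eDisc η α
        · exact (Set.indicator_of_mem hw g).trans
            (Set.indicator_of_mem (show (α, w) ∈ {q : ℂ × ℂ | ‖q.2 - q.1‖ < η * (1 - ‖q.1‖)} from hw) (fun q : ℂ × ℂ => g q.2)).symm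
        · exact (Set.indicator_of_notMem hw g).trans
            (Set.indicator_of_notMem (show (α, w) ∉ {q : ℂ × ℂ | ‖q.2 - q.1‖ < η * (1 - ‖q.1‖)} from hw) (fun q : ℂ × ℂ => g q.2)).symm
      rw [hrw]
      exact Measurable.lintegral_prod_right'
        ((hgmeas.comp measurable_snd).indicator hDopen.measurableSet)
    have hrwA : A = unitDisc ∩ {α : ℂ | g α * mA (eDisc η α)
        < ENNReal.ofReal ε * ∫⁻ w in eDisc η α, g w ∂mA} := rfl
    rw [hrwA]
    exact (Metric.isOpen_ball.measurableSet).inter (measurableSet_lt h1 h2)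
  -- pointwise estimate on A ∩ G
  have hpt : ∀ z ∈ A ∩ G,
      ENNReal.ofReal ((1 - ‖z‖) ^ p * ‖deriv f z‖ ^ p /
          (1 - ‖z‖))
        ≤ ENNReal.ofReal ε * ∫⁻ w, K z w ∂mA := by
    rintro z ⟨hzA, hzG⟩
    obtain ⟨hzD, hzlt⟩ := hzA
    have haz : ‖z‖ < 1 := by
      have : dist z 0 < 1 := Metric.mem_ball.mp hzD
      simpa [Complex.dist_eq] using this
    have hx : 0 < 1 - ‖z‖ := by linarith
    have hc0 : c z ≠ 0 := by
      rw [hcdef]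
      exact (ENNReal.ofReal_pos.mpr (by positivity)).ne'
    have hcinv_ne_top : (c z)⁻¹ ≠ ⊤ := ENNReal.inv_ne_top.mpr hc0
    have hIK : ∫⁻ w, K z w ∂mA = (c z)⁻¹ * ∫⁻ w in eDisc η z, g w ∂mA := by
      have hrw : (fun w => K z w) = (eDisc η z).indicator (fun w => (c z)⁻¹ * g w) := by
        funext w
        by_cases hw : w ∈ eDisc η z
        · have hzE : (z, w) ∈ E := ⟨hzG, hw⟩
          simp only [hKdef]
          rw [Set.indicator_of_mem hw, Set.indicator_of_mem hzE]
          rw [one_mul]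
        · have hzE : (z, w) ∉ E := fun h => hw h.2
          simp only [hKdef]
          rw [Set.indicator_of_notMem hw, Set.indicator_of_notMem hzE]
          rw [zero_mul, zero_mul]
      rw [hrw, lintegral_indicator (heDiscMeas z), lintegral_const_mul' _ _ hcinv_ne_top]
    have hmAe : mA (eDisc η z) = ENNReal.ofReal (η^2 * (1 - ‖z‖)^2) := by
      rw [eDisc_eq_ball, mA_ball _ (by positivity)]
      congr 1
      ring
    have hstep : ENNReal.ofReal ((1 - ‖z‖) ^ p * ‖deriv f z‖ ^ p /
          (1 - ‖z‖))
        = (g z * mA (eDisc η z)) * (c z)⁻¹ := by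
      rw [hmAe]
      simp only [hcdef, hgdef, hFdef]
      rw [← ENNReal.ofReal_inv_of_pos (by positivity : (0:ℝ) < η^2 * (1 - ‖z‖)^3)]
      rw [← ENNReal.ofReal_mul (hFnn z haz), ← ENNReal.ofReal_mul
        (mul_nonneg (hFnn z haz) (by positivity))]
      congr 1
      field_simp
      ring
    rw [hIK, hstep]
    calc (g z * mA (eDisc η z)) * (c z)⁻¹
        ≤ (ENNReal.ofReal ε * ∫⁻ w in eDisc η z, g w ∂mA) * (c z)⁻¹ :=
          mul_le_mul_left hzlt.le _
      _ = ENNReal.ofReal ε * ((c z)⁻¹ * ∫⁻ w in eDisc η z, g w ∂mA) := by ring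
  -- kernel estimate
  have hker : ∀ w : ℂ, ∫⁻ z, K z w ∂mA
      ≤ Gβ.indicator (fun w => ENNReal.ofReal (C₁ / (1 - ‖w‖)) * g w) w := by
    intro w
    by_cases hw : w ∈ Gβ
    · have hawlt : ‖w‖ < 1 := coneRegion_lt_one hβ1 hξ hw
      have hy : 0 < 1 - ‖w‖ := by linarith
      set r := η * (1 - ‖w‖) / (1 - η) with hrdef
      have hrpos : 0 < r := div_pos (mul_pos hη0 hy) h1η
      set c₃ : ℝ := (1+η)^3 / (η^2 * (1 - ‖w‖)^3) with hc₃def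
      have hc₃0 : 0 ≤ c₃ := by positivity
      have hptw : ∀ z, K z w ≤ (Metric.ball w r).indicator
          (fun _ => ENNReal.ofReal c₃ * g w) z := by
        intro z
        by_cases hzE : (z, w) ∈ E
        · obtain ⟨hzG, hzw⟩ := hzE
          have hazlt : ‖z‖ < 1 := coneRegion_lt_one (by norm_num) hξ hzG
          have hxz : 0 < 1 - ‖z‖ := by linarith
          have htri1 : ‖w‖ ≤ ‖z‖ + ‖w - z‖ := by
            have := norm_add_le z (w - z)
            simpa using this
          have htri2 : ‖z‖ ≤ ‖w‖ + ‖w - z‖ := by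
            have h := norm_add_le w (z - w)
            simp only [add_sub_cancel] at h
            rw [norm_sub_rev z w] at h
            exact h
          have h1 : (1-η) * (1 - ‖z‖) < 1 - ‖w‖ := by nlinarith
          have h2 : 1 - ‖w‖ ≤ (1+η) * (1 - ‖z‖) := by nlinarith
          have hzball : z ∈ Metric.ball w r := by
            rw [Metric.mem_ball, Complex.dist_eq]
            have e1 : ‖z - w‖ = ‖w - z‖ := norm_sub_rev z w
            rw [e1, hrdef]
            rw [lt_div_iff₀ h1η]
            nlinarith
          rw [Set.indicator_of_mem hzball]
          have hKval : K z w = (c z)⁻¹ * g w := by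
            simp only [hKdef]
            rw [Set.indicator_of_mem (show (z, w) ∈ E from ⟨hzG, hzw⟩), one_mul]
          rw [hKval]
          apply mul_le_mul_left
          simp only [hcdef]
          rw [← ENNReal.ofReal_inv_of_pos (by positivity : (0:ℝ) < η^2 * (1 - ‖z‖)^3)]
          apply ENNReal.ofReal_le_ofReal
          rw [hc₃def]
          exact inv_cube_bound hη0 hxz hy h2
        · simp only [hKdef]
          rw [Set.indicator_of_notMem hzE, zero_mul, zero_mul]
          exact zero_le
      calc ∫⁻ z, K z w ∂mA
          ≤ ∫⁻ z, (Metric.ball w r).indicator (fun _ => ENNReal.ofReal c₃ * g w) z ∂mA :=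
            lintegral_mono hptw
        _ = (ENNReal.ofReal c₃ * g w) * mA (Metric.ball w r) :=
            lintegral_indicator_const measurableSet_ball _
        _ = Gβ.indicator (fun w => ENNReal.ofReal (C₁ / (1 - ‖w‖)) * g w) w := by
            rw [Set.indicator_of_mem hw, mA_ball _ hrpos.le]
            calc (ENNReal.ofReal c₃ * g w) * ENNReal.ofReal (r^2)
                = (ENNReal.ofReal c₃ * ENNReal.ofReal (r^2)) * g w := by ring
              _ = ENNReal.ofReal (c₃ * r^2) * g w := by
                  rw [← ENNReal.ofReal_mul hc₃0]
              _ = ENNReal.ofReal (C₁ / (1 - ‖w‖)) * g w := by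
                  congr 2
                  rw [hc₃def, hrdef, hC₁def]
                  exact c3_r2_eq hη0 hη1 hy
    · have hzero : ∀ z, K z w = 0 := by
        intro z
        by_cases hzE : (z, w) ∈ E
        · exact absurd (cone_geom hη0 hη1 hξ hzE.1 hzE.2) hw
        · simp only [hKdef]
          rw [Set.indicator_of_notMem hzE, zero_mul, zero_mul]
      rw [Set.indicator_of_notMem hw]
      simp only [hzero, lintegral_zero]
      exact le_rfl
  -- congruence on Gβ
  have hcongr : ∀ᵐ w ∂mA, w ∈ Gβ →
      ENNReal.ofReal (C₁ / (1 - ‖w‖)) * g w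
        = ENNReal.ofReal C₁ *
            ENNReal.ofReal ((1 - ‖w‖) ^ p * ‖deriv f w‖ ^ p /
              (1 - ‖w‖)) := by
    refine Filter.Eventually.of_forall fun w hw => ?_
    have hawlt : ‖w‖ < 1 := coneRegion_lt_one hβ1 hξ hw
    have hy : 0 < 1 - ‖w‖ := by linarith
    simp only [hgdef, hFdef]
    rw [← ENNReal.ofReal_mul (by positivity : (0:ℝ) ≤ C₁ / (1 - ‖w‖)),
      ← ENNReal.ofReal_mul hC₁0]
    congr 1
    rw [div_mul_eq_mul_div, mul_div_assoc]
  -- main chain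
  calc ∫⁻ z in A ∩ G,
        ENNReal.ofReal ((1 - ‖z‖) ^ p * ‖deriv f z‖ ^ p /
          (1 - ‖z‖)) ∂mA
      ≤ ∫⁻ z in A ∩ G, ENNReal.ofReal ε * ∫⁻ w, K z w ∂mA ∂mA :=
        setLIntegral_mono' (hAmeas.inter hGopen.measurableSet) hpt
    _ ≤ ∫⁻ z, ENNReal.ofReal ε * ∫⁻ w, K z w ∂mA ∂mA := setLIntegral_le_lintegral _ _
    _ = ENNReal.ofReal ε * ∫⁻ z, ∫⁻ w, K z w ∂mA ∂mA :=
        lintegral_const_mul' _ _ ENNReal.ofReal_ne_top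
    _ = ENNReal.ofReal ε * ∫⁻ w, ∫⁻ z, K z w ∂mA ∂mA := by
        rw [lintegral_lintegral_swap hKmeas.aemeasurable]
    _ ≤ ENNReal.ofReal ε * ∫⁻ w, Gβ.indicator
          (fun w => ENNReal.ofReal (C₁ / (1 - ‖w‖)) * g w) w ∂mA :=
        mul_le_mul_right (lintegral_mono hker) _
    _ = ENNReal.ofReal ε * ∫⁻ w in Gβ,
          ENNReal.ofReal (C₁ / (1 - ‖w‖)) * g w ∂mA := by
        rw [lintegral_indicator hGβopen.measurableSet]
    _ = ENNReal.ofReal ε * ∫⁻ w in Gβ, ENNReal.ofReal C₁ *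
          ENNReal.ofReal ((1 - ‖w‖) ^ p * ‖deriv f w‖ ^ p /
            (1 - ‖w‖)) ∂mA := by
        rw [setLIntegral_congr_fun_ae hGβopen.measurableSet hcongr]
    _ = ENNReal.ofReal ε * (ENNReal.ofReal C₁ * ∫⁻ w in Gβ,
          ENNReal.ofReal ((1 - ‖w‖) ^ p * ‖deriv f w‖ ^ p /
            (1 - ‖w‖)) ∂mA) := by
        rw [lintegral_const_mul' _ _ ENNReal.ofReal_ne_top]
    _ = ENNReal.ofReal (ε * C₁) * ∫⁻ w in Gβ,
          ENNReal.ofReal ((1 - ‖w‖) ^ p * ‖deriv f w‖ ^ p /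
            (1 - ‖w‖)) ∂mA := by
        rw [← mul_assoc, ← ENNReal.ofReal_mul hε.le]
end
end

section
/- There exists a function f in the Bloch space 𝓑 and constants c > 0, η ∈ (0,1) and δ > 0 such that m(G_c ∩ Δ(α,η)) ≥ δ m(Δ(α,η)) for every α ∈ 𝔻, where G_c = {z ∈ 𝔻 : |f′(z)|(1−|z|) > c}. -/
open MeasureTheory Complex Set
open scoped Real ENNReal

noncomputable section

/-! ### Auxiliary development for Statement 18 -/

namespace Statement18

/-- The lacunary series `f(z) = ∑ z^(100^n)`. -/
def F (z : ℂ) : ℂ := ∑' n : ℕ, z ^ (100 ^ n)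

/-- Its termwise derivative. -/
def G (z : ℂ) : ℂ := ∑' n : ℕ, ((100 ^ n : ℕ) : ℂ) * z ^ (100 ^ n - 1)

lemma geom_le {r : ℝ} (h0 : 0 ≤ r) (h1 : r < 1) (m : ℕ) :
    ∑ k ∈ Finset.range m, r ^ k ≤ (1 - r)⁻¹ := by
  rw [inv_eq_one_div, le_div_iff₀ (by linarith)]
  have h := geom_sum_mul r m
  have h2 : (0:ℝ) ≤ r ^ m := pow_nonneg h0 m
  nlinarith [h]

/-- Partial sums of the derivative-norm series are uniformly bounded. -/
lemma partialA {r : ℝ} (h0 : 0 ≤ r) (h1 : r < 1) (N : ℕ) :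
    ∑ n ∈ Finset.range N, (100:ℝ)^n * r^(100^n - 1) ≤ 1 + (100/99) * (1-r)⁻¹ := by
  have hinv : (0:ℝ) ≤ (1-r)⁻¹ := inv_nonneg.mpr (by linarith)
  rcases N with _ | M
  · simp
    linarith
  rw [Finset.sum_range_succ']
  have hstep : ∀ i : ℕ, (100:ℝ)^(i+1) * r^(100^(i+1) - 1) ≤
      (100/99) * ((∑ k ∈ Finset.range (100^(i+1)), r ^ k) -
        (∑ k ∈ Finset.range (100^i), r ^ k)) := by
    intro i
    have hmono : (100:ℕ)^i ≤ 100^(i+1) := Nat.pow_le_pow_right (by norm_num) (by omega)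
    have hIco : (∑ k ∈ Finset.range (100^(i+1)), r ^ k) -
        (∑ k ∈ Finset.range (100^i), r ^ k)
        = ∑ k ∈ Finset.Ico (100^i) (100^(i+1)), r ^ k := by
      rw [Finset.sum_Ico_eq_sub _ hmono]
    rw [hIco]
    have hcard : ∀ k ∈ Finset.Ico ((100:ℕ)^i) (100^(i+1)),
        r ^ (100^(i+1) - 1) ≤ r ^ k := by
      intro k hk
      rw [Finset.mem_Ico] at hk
      exact pow_le_pow_of_le_one h0 h1.le (by omega)
    have hsum := Finset.card_nsmul_le_sum _ _ _ hcard
    rw [Nat.card_Ico, nsmul_eq_mul] at hsum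
    have hcc : ((100^(i+1) - 100^i : ℕ) : ℝ) = 99 * 100^i := by
      rw [Nat.cast_sub hmono]
      push_cast
      ring
    rw [hcc] at hsum
    have hrp : (0:ℝ) ≤ r ^ (100^(i+1) - 1) := pow_nonneg h0 _
    rw [pow_succ]
    linarith [hsum]
  have htel : ∑ i ∈ Finset.range M, ((∑ k ∈ Finset.range ((100:ℕ)^(i+1)), r ^ k) -
      (∑ k ∈ Finset.range ((100:ℕ)^i), r ^ k))
      = (∑ k ∈ Finset.range ((100:ℕ)^M), r ^ k) - (∑ k ∈ Finset.range ((100:ℕ)^0), r ^ k) :=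
    Finset.sum_range_sub (fun i => ∑ k ∈ Finset.range ((100:ℕ)^i), r ^ k) M
  have hsum1 : ∑ i ∈ Finset.range M, (100:ℝ)^(i+1) * r^(100^(i+1) - 1)
      ≤ (100/99) * ((∑ k ∈ Finset.range ((100:ℕ)^M), r ^ k) - 1) := by
    calc ∑ i ∈ Finset.range M, (100:ℝ)^(i+1) * r^(100^(i+1) - 1)
        ≤ ∑ i ∈ Finset.range M, (100/99) * ((∑ k ∈ Finset.range ((100:ℕ)^(i+1)), r ^ k) -
            (∑ k ∈ Finset.range ((100:ℕ)^i), r ^ k)) := Finset.sum_le_sum (fun i _ => hstep i)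
      _ = (100/99) * ((∑ k ∈ Finset.range ((100:ℕ)^M), r ^ k) - 1) := by
          rw [← Finset.mul_sum, htel]; norm_num
  have hgeom := geom_le h0 h1 ((100:ℕ)^M)
  have h00 : (100:ℝ)^(0:ℕ) * r^(100^(0:ℕ) - 1) = 1 := by norm_num
  rw [h00]
  nlinarith [hsum1, hgeom]

lemma term_nonneg {r : ℝ} (h0 : 0 ≤ r) (n : ℕ) : 0 ≤ (100:ℝ)^n * r^(100^n - 1) := by positivity

lemma summableA {r : ℝ} (h0 : 0 ≤ r) (h1 : r < 1) :
    Summable (fun n : ℕ => (100:ℝ)^n * r^(100^n - 1)) :=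
  summable_of_sum_range_le (term_nonneg h0) (partialA h0 h1)

lemma tsumA {r : ℝ} (h0 : 0 ≤ r) (h1 : r < 1) :
    ∑' n : ℕ, (100:ℝ)^n * r^(100^n - 1) ≤ 1 + (100/99) * (1-r)⁻¹ :=
  Real.tsum_le_of_sum_range_le (term_nonneg h0) (partialA h0 h1)

lemma norm_term (z : ℂ) (n : ℕ) :
    ‖((100 ^ n : ℕ) : ℂ) * z ^ (100 ^ n - 1)‖ = (100:ℝ)^n * ‖z‖^(100^n - 1) := by
  rw [norm_mul, norm_pow, Complex.norm_natCast]
  push_cast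
  ring

lemma summable_norm_G {z : ℂ} (hz : ‖z‖ < 1) :
    Summable (fun n : ℕ => ‖((100 ^ n : ℕ) : ℂ) * z ^ (100 ^ n - 1)‖) := by
  simpa only [norm_term] using summableA (norm_nonneg z) hz

/-- `F` has derivative `G z` at every point of the unit disc. -/
lemma hasDerivF {z : ℂ} (hz : ‖z‖ < 1) : HasDerivAt F (G z) z := by
  set R : ℝ := (1 + ‖z‖)/2 with hR
  have h0z : 0 ≤ ‖z‖ := norm_nonneg z
  have hR0 : 0 < R := by rw [hR]; linarith
  have hR1 : R < 1 := by rw [hR]; linarith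
  have hzR : ‖z‖ < R := by rw [hR]; linarith
  exact hasDerivAt_tsum_of_isPreconnected
    (u := fun n : ℕ => (100:ℝ)^n * R^(100^n - 1))
    (summableA hR0.le hR1) (Metric.isOpen_ball)
    ((convex_ball (0:ℂ) R).isPreconnected)
    (fun n y _ => hasDerivAt_pow (100^n) y)
    (fun n y hy => by
      rw [norm_term]
      have hy' : ‖y‖ ≤ R := (mem_ball_zero_iff.mp hy).le
      exact mul_le_mul_of_nonneg_left
        (pow_le_pow_left₀ (norm_nonneg y) hy' _) (by positivity))
    (Metric.mem_ball_self hR0)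
    (by
      convert summable_zero with n
      exact zero_pow (by positivity))
    (mem_ball_zero_iff.mpr hzR)

lemma derivF {z : ℂ} (hz : ‖z‖ < 1) : deriv F z = G z := (hasDerivF hz).deriv

lemma norm_G_le {z : ℂ} (hz : ‖z‖ < 1) : ‖G z‖ ≤ 1 + (100/99) * (1-‖z‖)⁻¹ :=
  le_trans (norm_tsum_le_tsum_norm (summable_norm_G hz))
    (by simpa only [norm_term] using tsumA (norm_nonneg z) hz)

/-- `F` is a Bloch function. -/
lemma memBloch_F : DifferentiableOn ℂ F unitDisc ∧
    ∀ z ∈ unitDisc, ‖deriv F z‖ * (1 - ‖z‖ ^ 2) ≤ 4 := by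
  constructor
  · intro z hz
    have := hasDerivF (mem_ball_zero_iff.mp hz)
    exact this.differentiableAt.differentiableWithinAt
  · intro z hz
    have hz' : ‖z‖ < 1 := mem_ball_zero_iff.mp hz
    rw [derivF hz']
    have hb := norm_G_le hz'
    set r := ‖z‖ with hr
    have h0 : 0 ≤ r := norm_nonneg z
    have hGnn : 0 ≤ ‖G z‖ := norm_nonneg _
    have h1r2 : (0:ℝ) ≤ 1 - r^2 := by nlinarith
    have key := mul_le_mul_of_nonneg_right hb h1r2
    have e : (1-r)⁻¹ * (1 - r^2) = 1 + r := by
      have : (1:ℝ) - r ≠ 0 := by linarith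
      field_simp
      ring
    nlinarith [key, e]

/-- `(1 - 1/m)^(m-1) ≥ 1/4`. -/
lemma quarter (m : ℕ) (hm : 1 ≤ m) : (1/4 : ℝ) ≤ (1 - (m:ℝ)⁻¹) ^ (m - 1) := by
  rcases Nat.eq_or_lt_of_le hm with h | h
  · rw [← h]; norm_num
  · -- m ≥ 2
    have hm2 : (2:ℕ) ≤ m := h
    have hm1R : (1:ℝ) ≤ (m:ℝ) - 1 := by
      have : (2:ℝ) ≤ (m:ℝ) := by exact_mod_cast hm2
      linarith
    have hmpos : (0:ℝ) < (m:ℝ) := by positivity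
    have hm1pos : (0:ℝ) < (m:ℝ) - 1 := by linarith
    set t : ℝ := ((m:ℝ) - 1)⁻¹ with ht
    have htpos : 0 < t := inv_pos.mpr hm1pos
    have hinv : 1 - (m:ℝ)⁻¹ = (1 + t)⁻¹ := by
      rw [ht]
      field_simp
      ring
    have hexp : (1 + t) ^ (m - 1) ≤ Real.exp 1 := by
      have h1 : 1 + t ≤ Real.exp t := by
        have := Real.add_one_le_exp t
        linarith
      have h2 : (1 + t) ^ (m - 1) ≤ (Real.exp t) ^ (m - 1) :=
        pow_le_pow_left₀ (by linarith) h1 _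
      have h3 : (Real.exp t) ^ (m - 1) = Real.exp (((m:ℝ) - 1) * t) := by
        rw [← Real.exp_nat_mul]
        congr 1
        have : ((m - 1 : ℕ) : ℝ) = (m:ℝ) - 1 := by
          rw [Nat.cast_sub hm]; norm_num
        rw [this]
      have h4 : ((m:ℝ) - 1) * t = 1 := by
        rw [ht]; field_simp
      rw [h3, h4] at h2
      exact h2
    have hexp4 : Real.exp 1 ≤ 4 := by
      have := Real.exp_one_lt_d9
      linarith
    have hpow_pos : (0:ℝ) < (1 + t) ^ (m - 1) := by positivity
    rw [hinv, inv_pow]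
    rw [le_inv_comm₀ (by norm_num) hpow_pos]
    linarith

/-- Tail estimate: for `k = n+1+i` and `r ≤ 1 - (100^n)⁻¹/2`. -/
lemma tail (n i : ℕ) {r : ℝ} (h0 : 0 ≤ r) (hr : r ≤ 1 - ((100:ℝ)^n)⁻¹/2) :
    (100:ℝ)^(n+1+i) * r^(100^(n+1+i) - 1)
      ≤ 5000 * (100:ℝ)^n * (((10:ℝ)^6)⁻¹)^(i+1) := by
  set w : ℝ := ((100:ℝ)^n)⁻¹/2 with hw
  have hwpos : 0 < w := by positivity
  have h100 : (1:ℝ) ≤ (100:ℝ)^n := one_le_pow₀ (by norm_num)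
  have hwlt : w ≤ 1/2 := by
    rw [hw]
    have : ((100:ℝ)^n)⁻¹ ≤ 1 := inv_le_one_of_one_le₀ h100
    linarith
  -- r ≤ 1 - w
  have hrw : r ≤ 1 - w := hr
  set M : ℕ := 100^(n+1+i) - 1 with hM
  set s : ℕ := 24 * 100^(n+i) with hs
  have hns : (1:ℕ) ≤ 100^(n+i) := Nat.one_le_pow _ _ (by norm_num)
  have h4s : 4*s ≤ M := by
    rw [hs, hM]
    have : (100:ℕ)^(n+1+i) = 100 * 100^(n+i) := by ring
    omega
  -- step 1 : r^M ≤ (1-w)^M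
  have step1 : r^M ≤ (1-w)^M := pow_le_pow_left₀ h0 hrw M
  -- step 2 : (1-w)^M ≤ ((1+w)^M)⁻¹
  have honew : (0:ℝ) < (1+w)^M := by positivity
  have step2 : (1-w)^M ≤ ((1+w)^M)⁻¹ := by
    rw [← one_div, le_div_iff₀ honew, ← mul_pow]
    have e : (1-w)*(1+w) = 1 - w^2 := by ring
    rw [e]
    exact pow_le_one₀ (by nlinarith) (by nlinarith)
  -- step 3 : (s*w)^4 ≤ (1+w)^M
  have step3 : ((s:ℝ)*w)^4 ≤ (1+w)^M := by
    have h1 : ((1:ℝ)+w)^(4*s) ≤ (1+w)^M := pow_le_pow_right₀ (by linarith) h4s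
    have h2 : ((1:ℝ)+w)^(4*s) = (((1+w)^s)^4) := by rw [← pow_mul, mul_comm]
    have h3 : 1 + (s:ℝ)*w ≤ (1+w)^s := by
      have := one_add_mul_le_pow (a := w) (by linarith) s
      linarith [this]
    have h4 : ((s:ℝ)*w)^4 ≤ ((1+w)^s)^4 := by
      apply pow_le_pow_left₀ (by positivity)
      linarith
    rw [h2] at h1
    exact le_trans h4 h1
  -- step 4 : s*w = 12 * 100^i
  have step4 : (s:ℝ)*w = 12 * (100:ℝ)^i := by
    rw [hs, hw]
    push_cast
    have hne : ((100:ℝ)^n) ≠ 0 := by positivity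
    field_simp
    ring
  -- combine
  have hrM : r^M ≤ ((12 * (100:ℝ)^i)^4)⁻¹ := by
    refine le_trans (le_trans step1 step2) ?_
    apply inv_anti₀ (by positivity)
    rw [← step4]
    exact step3
  have hLHS : (100:ℝ)^(n+1+i) * r^(100^(n+1+i) - 1)
      ≤ (100:ℝ)^(n+1+i) * ((12 * (100:ℝ)^i)^4)⁻¹ := by
    rw [← hM]
    exact mul_le_mul_of_nonneg_left hrM (by positivity)
  refine le_trans hLHS ?_
  have e1 : (100:ℝ)^(n+1+i) = 100 * (100:ℝ)^n * (100:ℝ)^i := by ring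
  have e2 : ((12 * (100:ℝ)^i)^4) = 20736 * ((100:ℝ)^i)^4 := by ring
  have e3 : (((10:ℝ)^6)⁻¹)^(i+1) = (((10:ℝ)^6) * ((100:ℝ)^i)^3)⁻¹ := by
    rw [← inv_pow]
    congr 1
    rw [pow_succ, show ((100:ℝ)^i)^3 = ((10:ℝ)^6)^i by
      rw [← pow_mul, mul_comm, pow_mul]; norm_num]
    ring_nf
    simp only [one_div]
  rw [e1, e2, e3]
  have hai : (0:ℝ) < (100:ℝ)^i := by positivity
  have han : (0:ℝ) < (100:ℝ)^n := by positivity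
  rw [← div_eq_mul_inv, ← div_eq_mul_inv,
    div_le_div_iff₀ (by positivity) (by positivity)]
  nlinarith [mul_pos han (pow_pos hai 4)]


/-- Partial sums away from the main index `n` are small. -/
lemma rest_partial (n : ℕ) {r : ℝ} (h0 : 0 ≤ r) (hr : r ≤ 1 - ((100:ℝ)^n)⁻¹/2) (N : ℕ) :
    ∑ k ∈ Finset.range N, (if k = n then 0 else (100:ℝ)^k * r^(100^k - 1))
      ≤ (1/99 + 1/100) * (100:ℝ)^n := by
  have h100 : (1:ℝ) ≤ (100:ℝ)^n := one_le_pow₀ (by norm_num)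
  have hr1 : r < 1 := by
    have : (0:ℝ) < ((100:ℝ)^n)⁻¹/2 := by positivity
    linarith
  set f : ℕ → ℝ := fun k => (if k = n then 0 else (100:ℝ)^k * r^(100^k - 1)) with hf
  have hterm_le_pow : ∀ k : ℕ, (100:ℝ)^k * r^(100^k - 1) ≤ (100:ℝ)^k := by
    intro k
    have h1 : r^(100^k - 1) ≤ 1 := pow_le_one₀ h0 hr1.le
    nlinarith [pow_pos (show (0:ℝ) < 100 by norm_num) k]
  have hgeo : ∀ m : ℕ, m ≤ n → ∑ k ∈ Finset.range m, (100:ℝ)^k ≤ (100:ℝ)^n / 99 := by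
    intro m hm
    rw [geom_sum_eq (by norm_num)]
    have h1 : (100:ℝ)^m ≤ (100:ℝ)^n := pow_le_pow_right₀ (by norm_num) hm
    have h2 : (0:ℝ) < (100:ℝ)^m := by positivity
    rw [show (100:ℝ) - 1 = 99 by norm_num]
    linarith
  have hfirst : ∀ m : ℕ, m ≤ n → ∑ k ∈ Finset.range m, f k ≤ (100:ℝ)^n / 99 := by
    intro m hm
    refine le_trans (Finset.sum_le_sum (fun k _ => ?_)) (hgeo m hm)
    simp only [hf]
    split_ifs with h
    · positivity
    · exact hterm_le_pow k
  rcases le_or_gt N n with hNn | hNn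
  · have := hfirst N hNn
    linarith
  · have hsplit : ∑ k ∈ Finset.range N, f k
        = (∑ k ∈ Finset.range (n+1), f k) + ∑ k ∈ Finset.Ico (n+1) N, f k := by
      simp only [Finset.range_eq_Ico]
      exact (Finset.sum_Ico_consecutive _ (by omega) (by omega : n+1 ≤ N)).symm
    have hpart1 : ∑ k ∈ Finset.range (n+1), f k ≤ (100:ℝ)^n / 99 := by
      rw [Finset.sum_range_succ]
      have : f n = 0 := by rw [hf]; simp
      rw [this, add_zero]
      exact hfirst n le_rfl
    have hpart2 : ∑ k ∈ Finset.Ico (n+1) N, f k ≤ (100:ℝ)^n / 100 := by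
      rw [Finset.sum_Ico_eq_sum_range]
      set L := N - (n+1)
      have hb : ∀ i ∈ Finset.range L, f (n+1+i)
          ≤ 5000 * (100:ℝ)^n * (((10:ℝ)^6)⁻¹)^(i+1) := by
        intro i _
        have hne : n+1+i ≠ n := by omega
        rw [hf]
        simp only [hne, if_false]
        exact tail n i h0 hr
      refine le_trans (Finset.sum_le_sum hb) ?_
      have heq : ∑ i ∈ Finset.range L, 5000 * (100:ℝ)^n * (((10:ℝ)^6)⁻¹)^(i+1)
          = 5000 * (100:ℝ)^n * ((10:ℝ)^6)⁻¹ *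
              ∑ i ∈ Finset.range L, (((10:ℝ)^6)⁻¹)^i := by
        rw [Finset.mul_sum]
        refine Finset.sum_congr rfl (fun i _ => ?_)
        rw [pow_succ]
        ring
      rw [heq]
      have hx : ∑ i ∈ Finset.range L, (((10:ℝ)^6)⁻¹)^i ≤ (1 - ((10:ℝ)^6)⁻¹)⁻¹ :=
        geom_le (by positivity) (by norm_num) _
      have hx2 : (1 - ((10:ℝ)^6)⁻¹)⁻¹ ≤ 2 := by norm_num
      have hcoef : (0:ℝ) ≤ 5000 * (100:ℝ)^n * ((10:ℝ)^6)⁻¹ := by positivity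
      have := mul_le_mul_of_nonneg_left (le_trans hx hx2) hcoef
      refine le_trans this ?_
      rw [show (5000:ℝ) * (100:ℝ)^n * ((10:ℝ)^6)⁻¹ * 2 = (100:ℝ)^n / 100 by ring]
    rw [hsplit]
    linarith

/-- Lower bound for `‖G z‖` on the annulus `1 - 100⁻ⁿ ≤ ‖z‖ ≤ 1 - 100⁻ⁿ/2`. -/
lemma lowerG {n : ℕ} {z : ℂ} (h1 : 1 - ((100:ℝ)^n)⁻¹ ≤ ‖z‖)
    (h2 : ‖z‖ ≤ 1 - ((100:ℝ)^n)⁻¹/2) :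
    (100:ℝ)^n / 5 ≤ ‖G z‖ := by
  have h100 : (1:ℝ) ≤ (100:ℝ)^n := one_le_pow₀ (by norm_num)
  have h0 : (0:ℝ) ≤ ‖z‖ := norm_nonneg z
  have hr1 : ‖z‖ < 1 := by
    have : (0:ℝ) < ((100:ℝ)^n)⁻¹/2 := by positivity
    linarith
  set a : ℕ → ℂ := fun k => ((100 ^ k : ℕ) : ℂ) * z ^ (100 ^ k - 1) with ha
  have hs : Summable (fun k => ‖a k‖) := summable_norm_G hr1
  have hsa : Summable a := hs.of_norm
  have hsplit : G z = a n + ∑' k, (if k = n then 0 else a k) := hsa.tsum_eq_add_tsum_ite n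
  -- main term
  have hmain : (100:ℝ)^n * (1/4) ≤ ‖a n‖ := by
    rw [ha]
    simp only []
    rw [norm_term]
    have hq := quarter (100^n) (Nat.one_le_pow _ _ (by norm_num))
    have hcast : ((100^n : ℕ) : ℝ) = (100:ℝ)^n := by push_cast; ring
    rw [hcast] at hq
    have hbase : (0:ℝ) ≤ 1 - ((100:ℝ)^n)⁻¹ := by
      have : ((100:ℝ)^n)⁻¹ ≤ 1 := inv_le_one_of_one_le₀ h100
      linarith
    have hpow : (1 - ((100:ℝ)^n)⁻¹) ^ (100^n - 1) ≤ ‖z‖ ^ (100^n - 1) :=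
      pow_le_pow_left₀ hbase h1 _
    nlinarith [le_trans hq hpow, pow_pos (show (0:ℝ) < 100 by norm_num) n]
  -- rest
  have hsum_ite : Summable (fun k => ‖(if k = n then 0 else a k)‖) := by
    refine Summable.of_nonneg_of_le (fun k => norm_nonneg _) (fun k => ?_) hs
    split_ifs with h
    · simp [norm_nonneg]
    · exact le_rfl
  have hrest : ‖∑' k, (if k = n then 0 else a k)‖ ≤ (1/99 + 1/100) * (100:ℝ)^n := by
    refine le_trans (norm_tsum_le_tsum_norm hsum_ite) ?_
    refine Real.tsum_le_of_sum_range_le (fun k => norm_nonneg _) (fun N => ?_)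
    have : ∀ k, ‖(if k = n then 0 else a k)‖
        = (if k = n then 0 else (100:ℝ)^k * ‖z‖^(100^k - 1)) := by
      intro k
      split_ifs with h
      · simp
      · rw [ha]; exact norm_term z k
    simp only [this]
    exact rest_partial n h0 h2 N
  have htri : ‖a n‖ ≤ ‖G z‖ + ‖∑' k, (if k = n then 0 else a k)‖ := by
    calc ‖a n‖ = ‖G z - ∑' k, (if k = n then 0 else a k)‖ := by rw [hsplit]; congr 1; ring
    _ ≤ ‖G z‖ + ‖∑' k, (if k = n then 0 else a k)‖ := norm_sub_le _ _
  nlinarith [hmain, hrest, htri, h100]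

lemma mA_ball (a : ℂ) {r : ℝ} (hr : 0 ≤ r) :
    mA (Metric.ball a r) = ENNReal.ofReal (r^2) := by
  rw [mA, Measure.smul_apply, smul_eq_mul, Complex.volume_ball]
  have hpi : ENNReal.ofReal Real.pi = (NNReal.pi : ℝ≥0∞) := by
    rw [← NNReal.coe_real_pi, ENNReal.ofReal_coe_nnreal]
  rw [hpi, mul_comm (ENNReal.ofReal r ^ 2), ← mul_assoc,
    ENNReal.inv_mul_cancel (by simp [NNReal.pi_ne_zero]) ENNReal.coe_ne_top, one_mul,
    ← ENNReal.ofReal_pow hr]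

lemma mem_unitDisc {z : ℂ} : z ∈ unitDisc ↔ ‖z‖ < 1 := by
  rw [unitDisc, Metric.mem_ball, Complex.dist_eq, sub_zero]

lemma pDisc_subset {α : ℂ} (hα : ‖α‖ < 1) :
    pDisc α (999/1000) ⊆ Metric.ball α (1998 * (1 - ‖α‖)) := by
  rintro z ⟨hz1, hz2⟩
  rw [mem_unitDisc] at hz1
  rw [Metric.mem_ball, Complex.dist_eq]
  have hden_ne : (1 : ℂ) - (starRingEnd ℂ) α * z ≠ 0 := by
    intro h
    have h1 : (1:ℂ) = (starRingEnd ℂ) α * z := by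
      have := sub_eq_zero.mp h
      linear_combination this
    have h2 : (1:ℝ) = ‖α‖ * ‖z‖ := by
      calc (1:ℝ) = ‖(starRingEnd ℂ) α * z‖ := by rw [← h1]; simp
      _ = ‖α‖ * ‖z‖ := by rw [norm_mul, Complex.norm_conj]
    nlinarith [norm_nonneg α, norm_nonneg z]
  have hdpos : 0 < ‖1 - (starRingEnd ℂ) α * z‖ :=
    norm_pos_iff.mpr hden_ne
  rw [norm_div, div_lt_iff₀ hdpos] at hz2
  have hden_le : ‖1 - (starRingEnd ℂ) α * z‖
      ≤ (1 - ‖α‖ ^ 2) + ‖α - z‖ := by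
    have hdec : (1 : ℂ) - (starRingEnd ℂ) α * z
        = (1 - ((Complex.normSq α : ℝ) : ℂ)) + (starRingEnd ℂ) α * (α - z) := by
      rw [← Complex.mul_conj]
      ring
    rw [hdec]
    refine le_trans (norm_add_le _ _) ?_
    have e1 : ‖1 - ((Complex.normSq α : ℝ) : ℂ)‖ = 1 - ‖α‖ ^ 2 := by
      have hns : Complex.normSq α = ‖α‖ ^ 2 := (Complex.sq_norm α).symm
      have h01 : (0:ℝ) ≤ 1 - Complex.normSq α := by nlinarith [norm_nonneg α]
      rw [show (1 : ℂ) - ((Complex.normSq α : ℝ) : ℂ) = (((1 - Complex.normSq α : ℝ)) : ℂ) by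
        push_cast; ring]
      rw [Complex.norm_real, Real.norm_eq_abs, _root_.abs_of_nonneg h01, hns]
    have e2 : ‖(starRingEnd ℂ) α * (α - z)‖ ≤ ‖α - z‖ := by
      rw [norm_mul, Complex.norm_conj]
      nlinarith [norm_nonneg (α - z)]
    linarith
  have habs : ‖z - α‖ = ‖α - z‖ := by
    rw [← norm_neg (z - α)]; congr 1; ring
  rw [habs]
  set d := ‖α - z‖
  set a := ‖α‖
  have ha0 : 0 ≤ a := norm_nonneg α
  have hd0 : 0 ≤ d := norm_nonneg _
  nlinarith [hz2, hden_le]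

lemma ball_subset_pDisc {α : ℂ} (hα : ‖α‖ < 1) :
    Metric.ball α ((999/1000) * (1 - ‖α‖)) ⊆ pDisc α (999/1000) := by
  intro z hz
  rw [Metric.mem_ball, Complex.dist_eq] at hz
  set a := ‖α‖
  have ha0 : 0 ≤ a := norm_nonneg α
  have hρ : 0 < 1 - a := by linarith
  have habs : ‖α - z‖ = ‖z - α‖ := by
    rw [← norm_neg (α - z)]; congr 1; ring
  have hz1 : ‖z‖ < 1 := by
    have h := norm_add_le α (z - α)
    rw [show α + (z - α) = z by ring] at h
    nlinarith [hz]
  refine ⟨mem_unitDisc.mpr hz1, ?_⟩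
  have hden : (1:ℝ) - a ≤ ‖1 - (starRingEnd ℂ) α * z‖ := by
    have h1 : ‖(starRingEnd ℂ) α * z‖ ≤ a := by
      rw [norm_mul, Complex.norm_conj]
      nlinarith [norm_nonneg z, hz1.le, ha0]
    have h2 := norm_add_le (1 - (starRingEnd ℂ) α * z) ((starRingEnd ℂ) α * z)
    rw [show (1 - (starRingEnd ℂ) α * z) + (starRingEnd ℂ) α * z = (1:ℂ) by ring] at h2
    rw [norm_one] at h2
    linarith
  have hdpos : 0 < ‖1 - (starRingEnd ℂ) α * z‖ := lt_of_lt_of_le hρ hden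
  rw [norm_div, div_lt_iff₀ hdpos, habs]
  nlinarith [hden, hz]

theorem exists_bloch_with_density' :
    ∃ f : ℂ → ℂ, memBloch f ∧
      ∃ c > (0:ℝ), ∃ η ∈ Set.Ioo (0:ℝ) 1, ∃ δ > (0:ℝ), ∀ α ∈ unitDisc,
        ENNReal.ofReal δ * mA (pDisc α η) ≤
          mA ({z ∈ unitDisc | c < ‖deriv f z‖ * (1 - ‖z‖)} ∩
            pDisc α η) := by
  classical
  refine ⟨F, ?_, 1/10, by norm_num, 999/1000, by norm_num, 1/(10:ℝ)^12, by norm_num, ?_⟩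
  · obtain ⟨hdiff, hbnd⟩ := memBloch_F
    exact ⟨hdiff, 4, fun z hz => hbnd z hz⟩
  intro α hαmem
  have hα : ‖α‖ < 1 := mem_unitDisc.mp hαmem
  have ha0 : 0 ≤ ‖α‖ := norm_nonneg α
  set ρ : ℝ := 1 - ‖α‖ with hρdef
  have hρ0 : 0 < ρ := by rw [hρdef]; linarith
  have hρ1 : ρ ≤ 1 := by rw [hρdef]; linarith
  -- choose n minimal with (100^n)⁻¹ ≤ ρ
  have hex : ∃ n : ℕ, ((100:ℝ)^n)⁻¹ ≤ ρ := by
    obtain ⟨n, hn⟩ := exists_pow_lt_of_lt_one hρ0 (show (1/100:ℝ) < 1 by norm_num)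
    refine ⟨n, ?_⟩
    have e : ((100:ℝ)^n)⁻¹ = (1/100:ℝ)^n := by rw [one_div_pow, one_div]
    rw [e]
    exact hn.le
  obtain ⟨n, hle, hgt⟩ : ∃ n : ℕ, ((100:ℝ)^n)⁻¹ ≤ ρ ∧ ρ < 100 * ((100:ℝ)^n)⁻¹ := by
    refine ⟨Nat.find hex, Nat.find_spec hex, ?_⟩
    rcases Nat.eq_zero_or_pos (Nat.find hex) with h0 | hpos
    · rw [h0]
      norm_num
      linarith
    · have hmin := Nat.find_min hex (show Nat.find hex - 1 < Nat.find hex by omega)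
      push_neg at hmin
      have hpow : (100:ℝ)^(Nat.find hex) = 100 * 100^(Nat.find hex - 1) := by
        rw [← pow_succ']
        congr 1
        omega
      have heq : ((100:ℝ)^(Nat.find hex - 1))⁻¹ = 100 * ((100:ℝ)^(Nat.find hex))⁻¹ := by
        rw [hpow]
        have h1 : ((100:ℝ)^(Nat.find hex - 1)) ≠ 0 := by positivity
        rw [mul_inv, ← mul_assoc, mul_inv_cancel₀ (by norm_num), one_mul]
      rw [heq] at hmin
      exact hmin
  set p : ℝ := ((100:ℝ)^n)⁻¹ with hpdef
  have hpinv : (100:ℝ)^n * p = 1 := mul_inv_cancel₀ (by positivity)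
  have hp0 : 0 < p := by rw [hpdef]; positivity
  have hp1 : p ≤ 1 := hle.trans hρ1
  have hp100 : ρ/100 < p := by linarith
  -- the direction of α and the center z₀
  set u : ℂ := if α = 0 then 1 else ((‖α‖ : ℝ) : ℂ)⁻¹ * α with hu
  have habs_u : ‖u‖ = 1 := by
    rw [hu]
    split_ifs with h
    · simp
    · rw [norm_mul, norm_inv, Complex.norm_real, Real.norm_eq_abs, _root_.abs_of_nonneg ha0,
        inv_mul_cancel₀ ((norm_ne_zero_iff.mpr h))]
  set z₀ : ℂ := ((1 - (3/4)*p : ℝ) : ℂ) * u with hz₀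
  have h34 : 0 ≤ 1 - (3/4)*p := by linarith
  have habs_z₀ : ‖z₀‖ = 1 - (3/4)*p := by
    rw [hz₀, norm_mul, Complex.norm_real, Real.norm_eq_abs, habs_u, mul_one, _root_.abs_of_nonneg h34]
  have h34ρ : (3/4)*p ≤ ρ := by linarith
  have hz₀α : ‖z₀ - α‖ = ρ - (3/4)*p := by
    rcases eq_or_ne α 0 with h | h
    · rw [h, sub_zero, habs_z₀]
      have : ρ = 1 := by rw [hρdef, h, norm_zero, sub_zero]
      rw [this]
    · have hane : ((‖α‖ : ℝ) : ℂ) ≠ 0 :=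
        Complex.ofReal_ne_zero.mpr ((norm_ne_zero_iff.mpr h))
      have hαu : α = ((‖α‖ : ℝ) : ℂ) * u := by
        rw [hu, if_neg h, ← mul_assoc, mul_inv_cancel₀ hane, one_mul]
      have hstep : z₀ - α = (((1 - (3/4)*p - ‖α‖ : ℝ)) : ℂ) * u := by
        rw [hz₀]
        nth_rewrite 1 [hαu]
        push_cast
        ring
      rw [hstep, norm_mul, Complex.norm_real, Real.norm_eq_abs, habs_u, mul_one,
        _root_.abs_of_nonneg (by rw [hρdef] at h34ρ; linarith), hρdef]
      ring
  -- the small ball inside the annulus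
  have hBsub : Metric.ball z₀ (p/4) ⊆
      ({z ∈ unitDisc | 1/10 < ‖deriv F z‖ * (1 - ‖z‖)} ∩
        pDisc α (999/1000)) := by
    intro z hzB
    rw [Metric.mem_ball, Complex.dist_eq] at hzB
    have htr1 : ‖z‖ < 1 - p/2 := by
      have h := norm_add_le z₀ (z - z₀)
      rw [show z₀ + (z - z₀) = z by ring, habs_z₀] at h
      linarith
    have htr2 : 1 - p < ‖z‖ := by
      have h := norm_add_le z (z₀ - z)
      rw [show z + (z₀ - z) = z₀ by ring, habs_z₀] at h
      have e : ‖z₀ - z‖ = ‖z - z₀‖ := by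
        rw [← norm_neg (z₀ - z)]
        congr 1
        ring
      rw [e] at h
      linarith
    have hz1 : ‖z‖ < 1 := by linarith
    have hlow : (100:ℝ)^n/5 ≤ ‖G z‖ := by
      have h1 : 1 - ((100:ℝ)^n)⁻¹ ≤ ‖z‖ := by
        show 1 - ((100:ℝ)^n)⁻¹ ≤ ‖z‖
        rw [← hpdef]
        linarith
      have h2 : ‖z‖ ≤ 1 - ((100:ℝ)^n)⁻¹/2 := by
        show ‖z‖ ≤ 1 - ((100:ℝ)^n)⁻¹/2
        rw [← hpdef]
        linarith
      exact lowerG h1 h2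
    constructor
    · refine ⟨mem_unitDisc.mpr hz1, ?_⟩
      have hder : deriv F z = G z := derivF hz1
      rw [hder]
      have hGnn : 0 ≤ ‖G z‖ := norm_nonneg _
      have hppos : (0:ℝ) < (100:ℝ)^n/5 := by positivity
      calc (1/10 : ℝ) = ((100:ℝ)^n/5) * (p/2) := by
            field_simp
            linarith [hpinv]
        _ < ((100:ℝ)^n/5) * (1 - ‖z‖) :=
            mul_lt_mul_of_pos_left (by linarith) hppos
        _ ≤ ‖G z‖ * (1 - ‖z‖) :=
            mul_le_mul_of_nonneg_right hlow (by linarith)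
    · apply ball_subset_pDisc hα
      rw [Metric.mem_ball, Complex.dist_eq]
      have h := norm_add_le (z - z₀) (z₀ - α)
      rw [show (z - z₀) + (z₀ - α) = z - α by ring, hz₀α] at h
      rw [← hρdef]
      linarith
  -- measure estimates
  have hup : mA (pDisc α (999/1000)) ≤ ENNReal.ofReal ((1998*ρ)^2) := by
    rw [← mA_ball α (show (0:ℝ) ≤ 1998*ρ by positivity)]
    have := pDisc_subset hα
    rw [← hρdef] at this
    exact measure_mono this
  have hdown : ENNReal.ofReal ((p/4)^2) ≤
      mA ({z ∈ unitDisc | 1/10 < ‖deriv F z‖ * (1 - ‖z‖)} ∩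
        pDisc α (999/1000)) := by
    rw [← mA_ball z₀ (show (0:ℝ) ≤ p/4 by positivity)]
    exact measure_mono hBsub
  calc ENNReal.ofReal (1/(10:ℝ)^12) * mA (pDisc α (999/1000))
      ≤ ENNReal.ofReal (1/(10:ℝ)^12) * ENNReal.ofReal ((1998*ρ)^2) :=
        mul_le_mul_right hup _
    _ = ENNReal.ofReal ((1/(10:ℝ)^12) * (1998*ρ)^2) :=
        (ENNReal.ofReal_mul (by norm_num)).symm
    _ ≤ ENNReal.ofReal ((p/4)^2) := by
        refine ENNReal.ofReal_le_ofReal ?_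
        nlinarith [mul_pos (sub_pos.mpr hp100) (show (0:ℝ) < p + ρ/100 by positivity),
          sq_nonneg ρ, hρ0.le]
    _ ≤ _ := hdown

end Statement18

/-- there exists a Bloch function whose level sets
`G_c = {z ∈ 𝔻 : |f'(z)|(1-|z|) > c}` satisfy the pseudohyperbolic density condition. -/
theorem exists_bloch_with_density :
    ∃ f : ℂ → ℂ, memBloch f ∧
      ∃ c > (0:ℝ), ∃ η ∈ Set.Ioo (0:ℝ) 1, ∃ δ > (0:ℝ), ∀ α ∈ unitDisc,
        ENNReal.ofReal δ * mA (pDisc α η) ≤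
          mA ({z ∈ unitDisc | c < ‖deriv f z‖ * (1 - ‖z‖)} ∩
            pDisc α η) := by
  exact Statement18.exists_bloch_with_density'
end
end
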